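/- Let u_1, …, u_s and g_1, …, g_s be holomorphic functions on 𝔹_N. Then the function z ↦ Σ_{j=1}^{s} conj(g_j(z))·u_j(z) is pluriharmonic on 𝔹_N if and only if Σ_{j=1}^{s} (conj(g_j(z)) − conj(g_j(0)))·(u_j(z) − u_j(0)) = 0 for all z ∈ 𝔹_N, which in turn is equivalent to: Σ_{j=1}^{s} conj(g_j(z))·u_j(z) = Σ_{j=1}^{s} ( conj(g_j(z))·u_j(0) + conj(g_j(0))·u_j(z) − conj(g_j(0))·u_j(0) ) for all z ∈ 𝔹_N. -/

import Mathlib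

open MeasureTheory Metric Complex ComplexConjugate Finset
open scoped ENNReal

noncomputable section

/-- `ℂ^N` with its (product) Lebesgue measure; `EuclideanSpace ℂ (Fin N)` is definitionally
`Fin N → ℂ`. -/
instance (N : ℕ) : MeasureSpace (EuclideanSpace ℂ (Fin N)) :=
  ⟨(volume : Measure (Fin N → ℂ)).map (WithLp.toLp 2)⟩

variable {N : ℕ}

/-- Hermitian inner product `⟨z,w⟩ = Σ z_j conj(w_j)`. -/
def hinner (z w : EuclideanSpace ℂ (Fin N)) : ℂ := ∑ j, z j * conj (w j)

/-- Lebesgue measure on `ℂ^N` normalized so that the unit ball has measure 1. -/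
def volB (N : ℕ) : Measure (EuclideanSpace ℂ (Fin N)) :=
  (volume (ball (0 : EuclideanSpace ℂ (Fin N)) 1))⁻¹ • volume

/-- The Berezin transform of `u`. -/
def berezin (u : EuclideanSpace ℂ (Fin N) → ℂ) (z : EuclideanSpace ℂ (Fin N)) : ℂ :=
  (((1 - ‖z‖ ^ 2) ^ (N + 1) : ℝ) : ℂ) *
    ∫ ξ in ball (0 : EuclideanSpace ℂ (Fin N)) 1,
      u ξ / ((‖1 - hinner z ξ‖ ^ (2 * (N + 1)) : ℝ) : ℂ) ∂(volB N)

/-- Pluriharmonic on the unit ball: sum of a holomorphic and an anti-holomorphic function. -/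
def Pluriharmonic (h : EuclideanSpace ℂ (Fin N) → ℂ) : Prop :=
  ∃ f g : EuclideanSpace ℂ (Fin N) → ℂ,
    DifferentiableOn ℂ f (ball 0 1) ∧ DifferentiableOn ℂ g (ball 0 1) ∧
      ∀ z ∈ ball (0 : EuclideanSpace ℂ (Fin N)) 1, h z = f z + conj (g z)

/-- `B(u)` has finite rank: it is a finite sum `Σ f_j conj(g_j)` with `f_j, g_j` holomorphic. -/
def FiniteRankBerezin (u : EuclideanSpace ℂ (Fin N) → ℂ) : Prop :=
  ∃ (n : ℕ) (f g : Fin n → EuclideanSpace ℂ (Fin N) → ℂ),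
    (∀ j, DifferentiableOn ℂ (f j) (ball 0 1)) ∧
    (∀ j, DifferentiableOn ℂ (g j) (ball 0 1)) ∧
    ∀ z ∈ ball (0 : EuclideanSpace ℂ (Fin N)) 1,
      berezin u z = ∑ j, f j z * conj (g j z)

/-- Wirtinger derivative `∂/∂z_j`. -/
def wdz (j : Fin N) (f : EuclideanSpace ℂ (Fin N) → ℂ) (z : EuclideanSpace ℂ (Fin N)) : ℂ :=
  (1 / 2 : ℂ) * (fderiv ℝ f z (EuclideanSpace.single j 1)
    - Complex.I * fderiv ℝ f z (EuclideanSpace.single j Complex.I))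

/-- Wirtinger derivative `∂/∂conj(z_j)`. -/
def wdzbar (j : Fin N) (f : EuclideanSpace ℂ (Fin N) → ℂ) (z : EuclideanSpace ℂ (Fin N)) : ℂ :=
  (1 / 2 : ℂ) * (fderiv ℝ f z (EuclideanSpace.single j 1)
    + Complex.I * fderiv ℝ f z (EuclideanSpace.single j Complex.I))

/-- The radial operator `E = Σ z_j ∂/∂z_j`. -/
def Eop (f : EuclideanSpace ℂ (Fin N) → ℂ) (z : EuclideanSpace ℂ (Fin N)) : ℂ :=
  ∑ j, z j * wdz j f z

/-- The radial operator `Ē = Σ conj(z_j) ∂/∂conj(z_j)`. -/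
def Ebarop (f : EuclideanSpace ℂ (Fin N) → ℂ) (z : EuclideanSpace ℂ (Fin N)) : ℂ :=
  ∑ j, conj (z j) * wdzbar j f z

/-- The Laplacian `Δ = Σ ∂²/(∂z_j ∂conj(z_j))`. -/
def lapOp (f : EuclideanSpace ℂ (Fin N) → ℂ) (z : EuclideanSpace ℂ (Fin N)) : ℂ :=
  ∑ j, wdz j (wdzbar j f) z

/-- The operator `|E+s|² − Δ = (E+s)∘(Ē+s) − Δ`. -/
def stepOp (s : ℝ) (f : EuclideanSpace ℂ (Fin N) → ℂ) : EuclideanSpace ℂ (Fin N) → ℂ :=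
  fun z => (Eop (fun w => Ebarop f w + (s : ℂ) * f w) z
      + (s : ℂ) * (Ebarop f z + (s : ℂ) * f z)) - lapOp f z

/-- The composition `(|E+m|²−Δ)∘(|E+(m−1)|²−Δ)∘⋯∘(|E+0|²−Δ)`. -/
def iterOp : ℕ → (EuclideanSpace ℂ (Fin N) → ℂ) → (EuclideanSpace ℂ (Fin N) → ℂ)
  | 0 => stepOp 0
  | (m + 1) => fun f => stepOp (m + 1) (iterOp m f)

/-- The invariant Laplacian `Δ̃ = (1−|z|²)(Δ − |E|²)`. -/
def invLap (f : EuclideanSpace ℂ (Fin N) → ℂ) (z : EuclideanSpace ℂ (Fin N)) : ℂ :=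
  (((1 - ‖z‖ ^ 2 : ℝ)) : ℂ) * (lapOp f z - Eop (Ebarop f) z)

/-- The operator `c − Δ̃` (a single factor of `p_m(Δ̃)`). -/
def factorOp (c : ℂ) (f : EuclideanSpace ℂ (Fin N) → ℂ) : EuclideanSpace ℂ (Fin N) → ℂ :=
  fun z => c * f z - invLap f z

/-- The product of operators `∏_{j=0}^{m} (j(j−N) − Δ̃)`. -/
def prodOp (N : ℕ) : ℕ → (EuclideanSpace ℂ (Fin N) → ℂ) → (EuclideanSpace ℂ (Fin N) → ℂ)
  | 0 => factorOp ((0 : ℂ) * ((0 : ℂ) - (N : ℂ)))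
  | (m + 1) => fun f => factorOp (((m : ℂ) + 1) * (((m : ℂ) + 1) - (N : ℂ))) (prodOp N m f)

open Classical in
/-- The Möbius automorphism `φ_w` of the unit ball interchanging `0` and `w`. -/
def mobius (w z : EuclideanSpace ℂ (Fin N)) : EuclideanSpace ℂ (Fin N) :=
  ((1 - hinner z w)⁻¹ : ℂ) •
    (w - (if w = 0 then 0 else (hinner z w / hinner w w) • w)
      - ((Real.sqrt (1 - ‖w‖ ^ 2) : ℝ) : ℂ) •
        (z - (if w = 0 then 0 else (hinner z w / hinner w w) • w)))

section AuxPluriharm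
open Filter Topology

private lemma conj_mem_ball {R : ℝ} {x : ℂ} (hx : x ∈ ball (0:ℂ) R) :
    (conj x : ℂ) ∈ ball (0:ℂ) R := by
  rw [mem_ball_zero_iff] at hx ⊢
  simpa using hx

private lemma diffAt_conj_conj {F : ℂ → ℂ} {c : ℂ}
    (h : DifferentiableAt ℂ F (conj c)) :
    DifferentiableAt ℂ (fun z => conj (F (conj z))) c := by
  set d := deriv F (conj c) with hd
  have h1 : Tendsto (slope F (conj c)) (𝓝[≠] (conj c)) (𝓝 d) :=
    hasDerivAt_iff_tendsto_slope.mp h.hasDerivAt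
  have hmap : Tendsto (fun z : ℂ => (conj z : ℂ)) (𝓝[≠] c) (𝓝[≠] (conj c)) := by
    have he : Topology.IsEmbedding (fun z : ℂ => (conj z : ℂ)) :=
      Complex.conjCLE.toHomeomorph.isEmbedding
    have hmeq := he.map_nhdsWithin_eq ({c}ᶜ) c
    have himg : (fun z : ℂ => (conj z : ℂ)) '' ({c}ᶜ) = {(conj c : ℂ)}ᶜ := by
      ext w
      simp only [Set.mem_image, Set.mem_compl_iff, Set.mem_singleton_iff]
      constructor
      · rintro ⟨y, hy, rfl⟩ h'
        exact hy (by simpa using congrArg (starRingEnd ℂ) h')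
      · intro hw
        exact ⟨conj w, fun h' => hw (by rw [← h']; simp), by simp⟩
    rw [himg] at hmeq
    exact le_of_eq hmeq
  have h2 : Tendsto (fun z => conj (slope F (conj c) (conj z))) (𝓝[≠] c) (𝓝 (conj d)) :=
    ((Complex.continuous_conj.tendsto d).comp (h1.comp hmap))
  have h3 : Tendsto (slope (fun z => conj (F (conj z))) c) (𝓝[≠] c) (𝓝 (conj d)) := by
    refine h2.congr' ?_
    filter_upwards [self_mem_nhdsWithin] with z hz
    have hz' : z ≠ c := hz
    rw [slope_def_field, slope_def_field, map_div₀, map_sub, map_sub]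
    simp
  exact (hasDerivAt_iff_tendsto_slope.mpr h3).differentiableAt

private def Qh {s : ℕ} (G U : Fin s → ℂ → ℂ) (F K : ℂ → ℂ) (l m : ℂ) : ℂ :=
  (∑ j, conj (G j (conj m)) * U j l) - F l - conj (K (conj m))

private lemma Qh_diffOn {R : ℝ} {s : ℕ} {G U : Fin s → ℂ → ℂ} {F K : ℂ → ℂ}
    (hG : ∀ j, ∀ x ∈ ball (0:ℂ) R, DifferentiableAt ℂ (G j) x)
    (hU : ∀ j, ∀ x ∈ ball (0:ℂ) R, DifferentiableAt ℂ (U j) x)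
    (hF : ∀ x ∈ ball (0:ℂ) R, DifferentiableAt ℂ F x)
    (hK : ∀ x ∈ ball (0:ℂ) R, DifferentiableAt ℂ K x)
    (a c q : ℂ) (S : Set ℂ)
    (hS : ∀ w ∈ S, a + w ∈ ball (0:ℂ) R ∧ c + q*w ∈ ball (0:ℂ) R) :
    DifferentiableOn ℂ (fun w => Qh G U F K (a + w) (c + q*w)) S := by
  intro w hw
  obtain ⟨h1, h2⟩ := hS w hw
  apply DifferentiableAt.differentiableWithinAt
  have hA : DifferentiableAt ℂ (fun w : ℂ => a + w) w :=
    (differentiableAt_const a).add differentiableAt_id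
  have hC : DifferentiableAt ℂ (fun w : ℂ => c + q*w) w :=
    (differentiableAt_const c).add ((differentiableAt_id).const_mul q)
  simp only [Qh]
  apply DifferentiableAt.sub
  apply DifferentiableAt.sub
  · apply DifferentiableAt.fun_sum
    intro j _
    apply DifferentiableAt.mul
    · have hGc : DifferentiableAt ℂ (fun m : ℂ => conj (G j (conj m))) (c + q*w) :=
        diffAt_conj_conj (hG j _ (conj_mem_ball h2))
      have hGc' := hGc.comp w hC
      exact hGc'
    · exact (hU j _ h1).comp w hA
  · exact (hF _ h1).comp w hA
  · have hKc := diffAt_conj_conj (hK _ (conj_mem_ball h2))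
    have hKc' := hKc.comp w hC
    exact hKc'


private lemma key1var {R : ℝ} (hR : 0 < R) {s : ℕ} {G U : Fin s → ℂ → ℂ} {F K : ℂ → ℂ}
    (hG : ∀ j, ∀ x ∈ ball (0:ℂ) R, DifferentiableAt ℂ (G j) x)
    (hU : ∀ j, ∀ x ∈ ball (0:ℂ) R, DifferentiableAt ℂ (U j) x)
    (hF : ∀ x ∈ ball (0:ℂ) R, DifferentiableAt ℂ F x)
    (hK : ∀ x ∈ ball (0:ℂ) R, DifferentiableAt ℂ K x)
    (heq : ∀ x ∈ ball (0:ℂ) R, ∑ j, conj (G j x) * U j x = F x + conj (K x)) :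
    ∀ x ∈ ball (0:ℂ) R, ∑ j, (conj (G j x) - conj (G j 0)) * (U j x - U j 0) = 0 := by
  have h0R : (0:ℂ) ∈ ball (0:ℂ) R := by simpa [mem_ball_zero_iff] using hR
  have hdiag : ∀ l ∈ ball (0:ℂ) R, Qh G U F K l (conj l) = 0 := by
    intro l hl
    simp only [Qh, Complex.conj_conj]
    rw [heq l hl]; ring
  -- Stage 2 : vanishing on translated anti-diagonals
  have stage2 : ∀ (b : ℝ) (t : ℂ), t + (b:ℂ)*I ∈ ball (0:ℂ) R → t - (b:ℂ)*I ∈ ball (0:ℂ) R →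
      Qh G U F K (t + (b:ℂ)*I) (t - (b:ℂ)*I) = 0 := by
    intro b t ht1 ht2
    have h1n := mem_ball_zero_iff.mp ht1
    have h2n := mem_ball_zero_iff.mp ht2
    have hb : |b| < R := by
      have h3 : ‖(t + (b:ℂ)*I) - (t - (b:ℂ)*I)‖ ≤ ‖t + (b:ℂ)*I‖ + ‖t - (b:ℂ)*I‖ :=
        norm_sub_le _ _
      have h4 : ‖(t + (b:ℂ)*I) - (t - (b:ℂ)*I)‖ = 2 * |b| := by
        rw [show (t + (b:ℂ)*I) - (t - (b:ℂ)*I) = 2 * ((b:ℂ)*I) by ring]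
        simp [norm_mul]
      rw [h4] at h3
      linarith
    set S : Set ℂ := ball (-((b:ℂ)*I)) R ∩ ball ((b:ℂ)*I) R with hSdef
    have hSo : IsOpen S := isOpen_ball.inter isOpen_ball
    have hSmem : ∀ w ∈ S, (b:ℂ)*I + w ∈ ball (0:ℂ) R ∧ -((b:ℂ)*I) + 1*w ∈ ball (0:ℂ) R := by
      intro w hw
      obtain ⟨hw1, hw2⟩ := hw
      rw [mem_ball, dist_eq_norm, sub_neg_eq_add] at hw1
      rw [mem_ball, dist_eq_norm] at hw2
      constructor
      · rw [mem_ball_zero_iff, add_comm]; exact hw1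
      · rw [mem_ball_zero_iff, show -((b:ℂ)*I) + 1*w = w - (b:ℂ)*I by ring]; exact hw2
    have hdiff := Qh_diffOn hG hU hF hK ((b:ℂ)*I) (-((b:ℂ)*I)) 1 S hSmem
    have hconn : IsPreconnected S :=
      ((convex_ball _ _).inter (convex_ball _ _)).isPreconnected
    have ht0 : (0:ℂ) ∈ S := by
      constructor <;>
        · rw [mem_ball, dist_eq_norm] <;> simp
          simpa using hb
    have hzero : ∃ᶠ w in 𝓝[≠] (0:ℂ),
        (fun w => Qh G U F K ((b:ℂ)*I + w) (-((b:ℂ)*I) + 1*w)) w = 0 := by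
      rw [Filter.frequently_iff]
      intro V hV
      obtain ⟨ε, hε, hsub⟩ := Metric.mem_nhdsWithin_iff.mp hV
      set x : ℝ := min (ε/2) ((R - |b|)/2) with hxdef
      have hx0 : 0 < x := lt_min (by linarith) (by linarith)
      refine ⟨(x:ℂ), hsub ⟨?_, ?_⟩, ?_⟩
      · rw [mem_ball, dist_eq_norm, sub_zero]
        rw [Complex.norm_real, Real.norm_eq_abs, abs_of_pos hx0]
        have : x ≤ ε/2 := min_le_left _ _
        linarith
      · simp only [Set.mem_compl_iff, Set.mem_singleton_iff]
        exact_mod_cast ne_of_gt hx0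
      · have hxR : x + |b| < R := by
          have : x ≤ (R - |b|)/2 := min_le_right _ _
          linarith
        have hmem : ((x:ℂ) + (b:ℂ)*I) ∈ ball (0:ℂ) R := by
          rw [mem_ball_zero_iff]
          calc ‖(x:ℂ) + (b:ℂ)*I‖ ≤ ‖(x:ℂ)‖ + ‖(b:ℂ)*I‖ := norm_add_le _ _
            _ = |x| + |b| := by simp [norm_mul]
            _ < R := by rw [abs_of_pos hx0]; exact hxR
        have hv := hdiag ((x:ℂ) + (b:ℂ)*I) hmem
        rw [show conj ((x:ℂ) + (b:ℂ)*I) = (x:ℂ) - (b:ℂ)*I by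
          rw [map_add, map_mul, Complex.conj_ofReal, Complex.conj_ofReal, Complex.conj_I]
          ring] at hv
        show Qh G U F K ((b:ℂ)*I + (x:ℂ)) (-((b:ℂ)*I) + 1*(x:ℂ)) = 0
        rw [show (b:ℂ)*I + (x:ℂ) = (x:ℂ) + (b:ℂ)*I by ring,
          show -((b:ℂ)*I) + 1*(x:ℂ) = (x:ℂ) - (b:ℂ)*I by ring]
        exact hv
    have heqz := (hdiff.analyticOnNhd hSo).eqOn_zero_of_preconnected_of_frequently_eq_zero
      hconn ht0 hzero
    have htS : t ∈ S := by
      constructor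
      · rw [mem_ball, dist_eq_norm, sub_neg_eq_add]; exact h1n
      · rw [mem_ball, dist_eq_norm]; exact h2n
    have h := heqz htS
    simp only [Pi.zero_apply] at h
    rw [show (b:ℂ)*I + t = t + (b:ℂ)*I by ring,
      show -((b:ℂ)*I) + 1*t = t - (b:ℂ)*I by ring] at h
    exact h
  -- Stage 3 : Qh vanishes everywhere
  have main : ∀ l ∈ ball (0:ℂ) R, ∀ m ∈ ball (0:ℂ) R, Qh G U F K l m = 0 := by
    intro l hl m hm
    have hln := mem_ball_zero_iff.mp hl
    have hmn := mem_ball_zero_iff.mp hm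
    set z : ℂ := (l + m)/2 with hzdef
    have hzn : ‖z‖ < R := by
      have h1 : ‖l + m‖ ≤ ‖l‖ + ‖m‖ := norm_add_le _ _
      have h2 : ‖z‖ = ‖l + m‖ / 2 := by
        rw [hzdef, norm_div]; norm_num
      rw [h2]; linarith
    set S : Set ℂ := ball (-z) R ∩ ball z R with hSdef
    have hSo : IsOpen S := isOpen_ball.inter isOpen_ball
    have hSmem : ∀ w ∈ S, z + w ∈ ball (0:ℂ) R ∧ z + (-1)*w ∈ ball (0:ℂ) R := by
      intro w hw
      obtain ⟨hw1, hw2⟩ := hw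
      rw [mem_ball, dist_eq_norm, sub_neg_eq_add] at hw1
      rw [mem_ball, dist_eq_norm] at hw2
      constructor
      · rw [mem_ball_zero_iff, add_comm]; exact hw1
      · rw [mem_ball_zero_iff, show z + (-1)*w = -(w - z) by ring, norm_neg]; exact hw2
    have hdiff := Qh_diffOn hG hU hF hK z z (-1) S hSmem
    have hconn : IsPreconnected S :=
      ((convex_ball _ _).inter (convex_ball _ _)).isPreconnected
    have ht0 : (0:ℂ) ∈ S := by
      constructor <;>
        · rw [mem_ball, dist_eq_norm] <;> simp
          simpa using hzn
    have hzero : ∃ᶠ w in 𝓝[≠] (0:ℂ),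
        (fun w => Qh G U F K (z + w) (z + (-1)*w)) w = 0 := by
      rw [Filter.frequently_iff]
      intro V hV
      obtain ⟨ε, hε, hsub⟩ := Metric.mem_nhdsWithin_iff.mp hV
      set x : ℝ := min (ε/2) ((R - ‖z‖)/2) with hxdef
      have hx0 : 0 < x := lt_min (by linarith) (by linarith)
      have hxR : ‖z‖ + x < R := by
        have : x ≤ (R - ‖z‖)/2 := min_le_right _ _
        linarith
      have hnormxI : ‖(x:ℂ)*I‖ = x := by
        rw [norm_mul]; simp [abs_of_pos hx0]
      refine ⟨(x:ℂ)*I, hsub ⟨?_, ?_⟩, ?_⟩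
      · rw [mem_ball, dist_eq_norm, sub_zero, hnormxI]
        have : x ≤ ε/2 := min_le_left _ _
        linarith
      · simp only [Set.mem_compl_iff, Set.mem_singleton_iff]
        exact mul_ne_zero (by exact_mod_cast ne_of_gt hx0) Complex.I_ne_zero
      · have hm1 : z + (x:ℂ)*I ∈ ball (0:ℂ) R := by
          rw [mem_ball_zero_iff]
          calc ‖z + (x:ℂ)*I‖ ≤ ‖z‖ + ‖(x:ℂ)*I‖ := norm_add_le _ _
            _ = ‖z‖ + x := by rw [hnormxI]
            _ < R := hxR
        have hm2 : z - (x:ℂ)*I ∈ ball (0:ℂ) R := by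
          rw [mem_ball_zero_iff]
          calc ‖z - (x:ℂ)*I‖ ≤ ‖z‖ + ‖(x:ℂ)*I‖ := norm_sub_le _ _
            _ = ‖z‖ + x := by rw [hnormxI]
            _ < R := hxR
        have hv := stage2 x z hm1 hm2
        show Qh G U F K (z + (x:ℂ)*I) (z + (-1)*((x:ℂ)*I)) = 0
        rw [show z + (-1)*((x:ℂ)*I) = z - (x:ℂ)*I by ring]
        exact hv
    have heqz := (hdiff.analyticOnNhd hSo).eqOn_zero_of_preconnected_of_frequently_eq_zero
      hconn ht0 hzero
    have hwS : (l - m)/2 ∈ S := by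
      constructor
      · rw [mem_ball, dist_eq_norm, sub_neg_eq_add,
          show (l - m)/2 + z = l by rw [hzdef]; ring]
        exact hln
      · rw [mem_ball, dist_eq_norm, show (l - m)/2 - z = -m by rw [hzdef]; ring, norm_neg]
        exact hmn
    have h := heqz hwS
    simp only [Pi.zero_apply] at h
    rw [show z + (l - m)/2 = l by rw [hzdef]; ring,
      show z + (-1)*((l - m)/2) = m by rw [hzdef]; ring] at h
    exact h
  -- conclusion
  intro x hx
  have hcx : (conj x : ℂ) ∈ ball (0:ℂ) R := conj_mem_ball hx
  have E1 := heq x hx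
  have E2 : ∑ j, conj (G j x) * U j 0 = F 0 + conj (K x) := by
    have h := main 0 h0R (conj x) hcx
    simp only [Qh, Complex.conj_conj] at h
    linear_combination h
  have E3 : ∑ j, conj (G j 0) * U j x = F x + conj (K 0) := by
    have h := main x hx 0 h0R
    simp only [Qh, map_zero] at h
    linear_combination h
  have E4 : ∑ j, conj (G j 0) * U j 0 = F 0 + conj (K 0) := by
    have h := main 0 h0R 0 h0R
    simp only [Qh, map_zero] at h
    linear_combination h
  have expand : ∑ j, (conj (G j x) - conj (G j 0)) * (U j x - U j 0)
      = (∑ j, conj (G j x) * U j x) - (∑ j, conj (G j x) * U j 0)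
        - ((∑ j, conj (G j 0) * U j x) - (∑ j, conj (G j 0) * U j 0)) := by
    simp only [sub_mul, mul_sub, Finset.sum_sub_distrib]
    ring
  rw [expand, E1, E2, E3, E4]; ring


end AuxPluriharm

/-- Lemma 4.1: characterization of pluriharmonicity of `Σ conj(g_j)·u_j`. -/
theorem stmt14 {N : ℕ} (hN : 1 ≤ N) {s : ℕ}
    (u g : Fin s → EuclideanSpace ℂ (Fin N) → ℂ)
    (hu : ∀ j, DifferentiableOn ℂ (u j) (ball 0 1))
    (hg : ∀ j, DifferentiableOn ℂ (g j) (ball 0 1)) :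
    (Pluriharmonic (fun z => ∑ j, conj (g j z) * u j z) ↔
      ∀ z ∈ ball (0 : EuclideanSpace ℂ (Fin N)) 1,
        ∑ j, (conj (g j z) - conj (g j 0)) * (u j z - u j 0) = 0) ∧
    ((∀ z ∈ ball (0 : EuclideanSpace ℂ (Fin N)) 1,
        ∑ j, (conj (g j z) - conj (g j 0)) * (u j z - u j 0) = 0) ↔
      ∀ z ∈ ball (0 : EuclideanSpace ℂ (Fin N)) 1,
        ∑ j, conj (g j z) * u j z
          = ∑ j, (conj (g j z) * u j 0 + conj (g j 0) * u j z - conj (g j 0) * u j 0)) := by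
  classical
  have hpt : ∀ z : EuclideanSpace ℂ (Fin N),
      ((∑ j, (conj (g j z) - conj (g j 0)) * (u j z - u j 0) = 0) ↔
        (∑ j, conj (g j z) * u j z
          = ∑ j, (conj (g j z) * u j 0 + conj (g j 0) * u j z - conj (g j 0) * u j 0))) := by
    intro z
    have e : ∑ j, (conj (g j z) - conj (g j 0)) * (u j z - u j 0)
        = (∑ j, conj (g j z) * u j z)
          - ∑ j, (conj (g j z) * u j 0 + conj (g j 0) * u j z - conj (g j 0) * u j 0) := by
      rw [← Finset.sum_sub_distrib]
      exact Finset.sum_congr rfl fun j _ => by ring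
    rw [e, sub_eq_zero]
  refine ⟨⟨?_, fun hid => ?_⟩,
    ⟨fun h z hz => (hpt z).mp (h z hz), fun h z hz => (hpt z).mpr (h z hz)⟩⟩
  · -- pluriharmonic implies the identity
    rintro ⟨f, k, hf, hk, hfk⟩ z hz
    by_cases hz0 : z = 0
    · rw [hz0]; simp
    · have hzn : (0:ℝ) < ‖z‖ := norm_pos_iff.mpr hz0
      have hzb : ‖z‖ < 1 := mem_ball_zero_iff.mp hz
      have hR1 : 1 < ‖z‖⁻¹ := (one_lt_inv_iff₀).mpr ⟨hzn, hzb⟩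
      have hRpos : (0:ℝ) < ‖z‖⁻¹ := by linarith
      have hmaps : ∀ lam ∈ ball (0:ℂ) (‖z‖⁻¹),
          lam • z ∈ ball (0 : EuclideanSpace ℂ (Fin N)) 1 := by
        intro lam hlam
        rw [mem_ball_zero_iff] at hlam ⊢
        rw [norm_smul]
        have h1 : ‖lam‖ * ‖z‖ < ‖z‖⁻¹ * ‖z‖ := mul_lt_mul_of_pos_right hlam hzn
        rwa [inv_mul_cancel₀ hzn.ne'] at h1
      have hsm : ∀ lam : ℂ, DifferentiableAt ℂ (fun t : ℂ => t • z) lam :=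
        fun lam => (differentiableAt_id.smul_const z)
      have hGline : ∀ j, ∀ lam ∈ ball (0:ℂ) (‖z‖⁻¹),
          DifferentiableAt ℂ (fun lam : ℂ => g j (lam • z)) lam := by
        intro j lam hlam
        exact ((hg j).differentiableAt
          (isOpen_ball.mem_nhds (hmaps lam hlam))).comp lam (hsm lam)
      have hUline : ∀ j, ∀ lam ∈ ball (0:ℂ) (‖z‖⁻¹),
          DifferentiableAt ℂ (fun lam : ℂ => u j (lam • z)) lam := by
        intro j lam hlam
        exact ((hu j).differentiableAt
          (isOpen_ball.mem_nhds (hmaps lam hlam))).comp lam (hsm lam)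
      have hFline : ∀ lam ∈ ball (0:ℂ) (‖z‖⁻¹),
          DifferentiableAt ℂ (fun lam : ℂ => f (lam • z)) lam := by
        intro lam hlam
        exact (hf.differentiableAt
          (isOpen_ball.mem_nhds (hmaps lam hlam))).comp lam (hsm lam)
      have hKline : ∀ lam ∈ ball (0:ℂ) (‖z‖⁻¹),
          DifferentiableAt ℂ (fun lam : ℂ => k (lam • z)) lam := by
        intro lam hlam
        exact (hk.differentiableAt
          (isOpen_ball.mem_nhds (hmaps lam hlam))).comp lam (hsm lam)
      have heqline : ∀ lam ∈ ball (0:ℂ) (‖z‖⁻¹),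
          ∑ j, conj (g j (lam • z)) * u j (lam • z)
            = f (lam • z) + conj (k (lam • z)) :=
        fun lam hlam => hfk _ (hmaps lam hlam)
      have h1 := key1var hRpos hGline hUline hFline hKline heqline 1
        (by rw [mem_ball_zero_iff, norm_one]; exact hR1)
      simpa [one_smul, zero_smul] using h1
  · -- the identity implies pluriharmonic
    have hid2 := fun z hz => (hpt z).mp (hid z hz)
    refine ⟨fun z => (∑ j, conj (g j 0) * u j z) - ∑ j, conj (g j 0) * u j 0,
      fun z => ∑ j, g j z * conj (u j 0), ?_, ?_, ?_⟩
    · exact (DifferentiableOn.fun_sum fun j _ => (hu j).const_mul _).sub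
        (differentiableOn_const _)
    · exact DifferentiableOn.fun_sum fun j _ => (hg j).mul_const _
    · intro z hz
      have h2 := hid2 z hz
      show ∑ j, conj (g j z) * u j z = _
      rw [h2, map_sum]
      simp only [map_mul, Complex.conj_conj]
      simp only [Finset.sum_sub_distrib, Finset.sum_add_distrib]
      ring

end
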